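/- In a closed symmetric monoidal category, if X is weakly dualizable (i.e. the canonical map X ⊗ DX → 𝓗om(X, X) is an isomorphism) and reflexive (i.e. the canonical map X → DDX is an isomorphism), then X is dualizable, meaning X is reflexive and the canonical map X ⊗ DX → D(X ⊗ DX) is an isomorphism. -/

import Mathlib

open CategoryTheory CategoryTheory.Limits MonoidalCategory MonoidalClosed

universe v u

variable {C : Type u} [Category.{v} C] [MonoidalCategory C] [SymmetricCategory C]
  [MonoidalClosed C]

/-- The dual `D F := 𝓗om(F, Σ)` with respect to the unit `Σ = 𝟙_ C`. -/
noncomputable def Dl (F : C) : C := (ihom F).obj (𝟙_ C)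

/-- The evaluation map `e : D X ⊗ X ⟶ Σ`, adjoint to the identity of `D X`. -/
noncomputable def ev' (X : C) : Dl X ⊗ X ⟶ 𝟙_ C :=
  (β_ (Dl X) X).hom ≫ (ihom.ev X).app (𝟙_ C)

/-- The canonical reflexivity map `X ⟶ D D X`, adjoint to the evaluation `D X ⊗ X ⟶ Σ`. -/
noncomputable def reflexMap (X : C) : X ⟶ Dl (Dl X) :=
  MonoidalClosed.curry (ev' X)

/-- The canonical map `X ⊗ D X ⟶ 𝓗om(X, X)`, adjoint to
`X ⊗ D X ⊗ X → X ⊗ Σ ≅ X` given by `id_X ⊗ e`. -/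
noncomputable def wdMap (X : C) : X ⊗ Dl X ⟶ (ihom X).obj X :=
  MonoidalClosed.curry
    ((β_ X (X ⊗ Dl X)).hom ≫ (α_ X (Dl X) X).hom ≫ (X ◁ ev' X) ≫ (ρ_ X).hom)

/-- The canonical morphism `D X ⊗ D Y ⟶ D (Y ⊗ X)`, adjoint to the pairing
`D X ⊗ D Y ⊗ Y ⊗ X ⟶ D X ⊗ Σ ⊗ X ≅ D X ⊗ X ⟶ Σ`. -/
noncomputable def pairMap (X Y : C) : Dl X ⊗ Dl Y ⟶ Dl (Y ⊗ X) :=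
  MonoidalClosed.curry ((β_ (Y ⊗ X) (Dl X ⊗ Dl Y)).hom ≫
    (α_ (Dl X) (Dl Y) (Y ⊗ X)).hom ≫
      (Dl X ◁ ((α_ (Dl Y) Y X).inv ≫ (ev' Y ▷ X) ≫ (λ_ X).hom)) ≫ ev' X)

/-- The canonical self-duality comparison map `X ⊗ D X ⟶ D D X ⊗ D X ⟶ D (X ⊗ D X)`. -/
noncomputable def selfDualMap (X : C) : X ⊗ Dl X ⟶ Dl (X ⊗ Dl X) :=
  (reflexMap X ▷ Dl X) ≫ pairMap (Dl X) X

-- basic lemmas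
lemma ihom_ev_eq (X : C) : (ihom.ev X).app (𝟙_ C) = (β_ X (Dl X)).hom ≫ ev' X := by
  simp [ev']
  exact (SymmetricCategory.symmetry_assoc _ _ _).symm

lemma uncurry_reflexMap (X : C) : MonoidalClosed.uncurry (reflexMap X) = ev' X :=
  MonoidalClosed.uncurry_curry _

lemma whiskerLeft_reflex_ev (X : C) :
    (Dl X ◁ reflexMap X) ≫ (ihom.ev (Dl X)).app (𝟙_ C) = ev' X := by
  erw [← MonoidalClosed.uncurry_eq, uncurry_reflexMap]

lemma reflex_whiskerRight_ev (X : C) :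
    (reflexMap X ▷ Dl X) ≫ ev' (Dl X) = (β_ X (Dl X)).hom ≫ ev' X := by
  erw [ev', BraidedCategory.braiding_naturality_left_assoc, whiskerLeft_reflex_ev]

section Pairing
variable (X : C)

/-- Candidate coevaluation obtained from weak dualizability. -/
noncomputable def coevCand [IsIso (wdMap X)] : 𝟙_ C ⟶ X ⊗ Dl X :=
  MonoidalClosed.curry (ρ_ X).hom ≫ inv (wdMap X)

lemma triangle1 [IsIso (wdMap X)] :
    (coevCand X ▷ X) ≫ (α_ X (Dl X) X).hom ≫ (X ◁ ev' X) = (λ_ X).hom ≫ (ρ_ X).inv := by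
  have h : coevCand X ≫ wdMap X = MonoidalClosed.curry (ρ_ X).hom := by simp [coevCand]
  rw [wdMap, ← MonoidalClosed.curry_natural_left] at h
  have h2 := MonoidalClosed.curry_injective h
  rw [BraidedCategory.braiding_naturality_right_assoc] at h2
  have h3 : (β_ X (𝟙_ C)).hom = (ρ_ X).hom ≫ (λ_ X).inv := by
    rw [← braiding_leftUnitor X]; simp
  rw [h3] at h2
  simp only [Category.assoc] at h2
  have h4 := (cancel_epi (ρ_ X).hom).mp (h2.trans (Category.comp_id (ρ_ X).hom).symm)
  rw [← cancel_epi (λ_ X).inv, ← cancel_mono (ρ_ X).hom]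
  simpa [Category.assoc] using h4

end Pairing

lemma pair_exchange {A B : C} (f : A ⟶ 𝟙_ C) (g : B ⟶ 𝟙_ C) :
    (f ▷ B) ≫ (λ_ B).hom ≫ g = (A ◁ g) ≫ (ρ_ A).hom ≫ f := by
  rw [← leftUnitor_naturality g, ← whisker_exchange_assoc, unitors_equal,
    rightUnitor_naturality f]

section T2
variable (X : C) [IsIso (wdMap X)]

local notation "D" => Dl X
local notation "ε" => ev' X
local notation "η" => coevCand X

lemma key_t2 :
    (((ρ_ (Dl X)).inv ≫ (Dl X ◁ coevCand X) ≫ (α_ (Dl X) X (Dl X)).inv ≫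
      (ev' X ▷ Dl X) ≫ (λ_ (Dl X)).hom) ▷ X) ≫ ev' X = ev' X := by
  calc (((ρ_ D).inv ≫ (D ◁ η) ≫ (α_ D X D).inv ≫ (ε ▷ D) ≫ (λ_ D).hom) ▷ X) ≫ ε
      = 𝟙 (D ⊗ X) ⊗≫ ((D ◁ η) ▷ X) ⊗≫
          ((ε ▷ (D ⊗ X)) ≫ (λ_ (D ⊗ X)).hom ≫ ε) := by
        monoidal
    _ = 𝟙 (D ⊗ X) ⊗≫ ((D ◁ η) ▷ X) ⊗≫
          (((D ⊗ X) ◁ ε) ≫ (ρ_ (D ⊗ X)).hom ≫ ε) := by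
        rw [pair_exchange]
    _ = 𝟙 (D ⊗ X) ⊗≫ (D ◁ ((η ▷ X) ≫ (α_ X D X).hom ≫ (X ◁ ε))) ⊗≫ ε := by
        monoidal
    _ = ε := by rw [triangle1]; monoidal

end T2

lemma whisker_cancel' {X P Q : C} (f : P ⟶ Q) (e : Q ⊗ X ⟶ 𝟙_ C) :
    X ◁ f ≫ (β_ X Q).hom ≫ e = (β_ X P).hom ≫ f ▷ X ≫ e := by
  rw [BraidedCategory.braiding_naturality_right_assoc]

lemma whisker_cancel {X D : C} (e : D ⊗ X ⟶ 𝟙_ C) (δ : D ⟶ D) (h : δ ▷ X ≫ e = e) :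
    X ◁ δ ≫ (β_ X D).hom ≫ e = (β_ X D).hom ≫ e := by
  rw [BraidedCategory.braiding_naturality_right_assoc, h]

lemma triangle2 (X : C) [IsIso (wdMap X)] :
    (Dl X ◁ coevCand X) ≫ (α_ (Dl X) X (Dl X)).inv ≫ (ev' X ▷ Dl X) =
      (ρ_ (Dl X)).hom ≫ (λ_ (Dl X)).inv := by
  have hδ : (ρ_ (Dl X)).inv ≫ (Dl X ◁ coevCand X) ≫ (α_ (Dl X) X (Dl X)).inv ≫
      (ev' X ▷ Dl X) ≫ (λ_ (Dl X)).hom = 𝟙 (Dl X) := by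
    apply MonoidalClosed.uncurry_injective
    erw [MonoidalClosed.uncurry_eq, MonoidalClosed.uncurry_eq]
    erw [ihom_ev_eq, MonoidalCategory.whiskerLeft_id, Category.id_comp]
    exact whisker_cancel _ _ (key_t2 X)
  rw [← cancel_epi (ρ_ (Dl X)).inv, ← cancel_mono (λ_ (Dl X)).hom]
  simpa using hδ

/-- The exact pairing coming from weak dualizability. -/
noncomputable def exactPairingOfWd (X : C) [IsIso (wdMap X)] : ExactPairing X (Dl X) where
  coevaluation' := coevCand X
  evaluation' := ev' X
  coevaluation_evaluation' := triangle2 X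
  evaluation_coevaluation' := triangle1 X

section TensorPairing

variable (X Y Z W : C) [ExactPairing X Y] [ExactPairing Z W]

/-- The tensor product of two exact pairings. -/
noncomputable def exactPairingTensor : ExactPairing (X ⊗ Z) (W ⊗ Y) where
  coevaluation' :=
    η_ X Y ≫ (X ◁ ((λ_ Y).inv ≫ (η_ Z W ▷ Y) ≫ (α_ Z W Y).hom)) ≫ (α_ X Z (W ⊗ Y)).inv
  evaluation' :=
    (α_ W Y (X ⊗ Z)).hom ≫ (W ◁ ((α_ Y X Z).inv ≫ (ε_ X Y ▷ Z) ≫ (λ_ Z).hom)) ≫ ε_ Z W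
  coevaluation_evaluation' := by
    calc _ = 𝟙 _ ⊗≫ (((W ⊗ Y : C)) ◁ η_ X Y) ⊗≫
            (((W ⊗ (Y ⊗ X) : C)) ◁ ((λ_ Y).inv ≫ (η_ Z W ▷ Y)) ≫
              (W ◁ ε_ X Y) ▷ (((Z ⊗ W) ⊗ Y : C))) ⊗≫
            (ε_ Z W ▷ ((W ⊗ Y : C))) ⊗≫ 𝟙 _ := by
          monoidal
      _ = 𝟙 _ ⊗≫ (((W ⊗ Y : C)) ◁ η_ X Y) ⊗≫
            ((W ◁ ε_ X Y) ▷ Y ≫ ((W ⊗ 𝟙_ C : C)) ◁ ((λ_ Y).inv ≫ (η_ Z W ▷ Y))) ⊗≫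
            (ε_ Z W ▷ ((W ⊗ Y : C))) ⊗≫ 𝟙 _ := by
          rw [← whisker_exchange]
      _ = 𝟙 _ ⊗≫ (W ◁ ((Y ◁ η_ X Y) ≫ (α_ Y X Y).inv ≫ (ε_ X Y ▷ Y))) ⊗≫
            (((W ◁ η_ Z W) ≫ (α_ W Z W).inv ≫ (ε_ Z W ▷ W)) ▷ Y) ⊗≫ 𝟙 _ := by
          monoidal
      _ = (ρ_ (W ⊗ Y)).hom ≫ (λ_ (W ⊗ Y)).inv := by
          rw [ExactPairing.coevaluation_evaluation, ExactPairing.coevaluation_evaluation]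
          monoidal
  evaluation_coevaluation' := by
    calc _ = 𝟙 _ ⊗≫ (η_ X Y ▷ ((X ⊗ Z : C))) ⊗≫
            (X ◁ ((η_ Z W ▷ ((Y ⊗ (X ⊗ Z) : C))) ≫ (((Z ⊗ W : C)) ◁ ((α_ Y X Z).inv ≫
              (ε_ X Y ▷ Z) ≫ (λ_ Z).hom)))) ⊗≫
            (((X ⊗ Z : C)) ◁ ε_ Z W) ⊗≫ 𝟙 _ := by
          monoidal
      _ = 𝟙 _ ⊗≫ (η_ X Y ▷ ((X ⊗ Z : C))) ⊗≫
            (X ◁ ((𝟙_ C ◁ ((α_ Y X Z).inv ≫ (ε_ X Y ▷ Z) ≫ (λ_ Z).hom)) ≫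
              (η_ Z W ▷ Z))) ⊗≫
            (((X ⊗ Z : C)) ◁ ε_ Z W) ⊗≫ 𝟙 _ := by
          rw [← whisker_exchange]
      _ = 𝟙 _ ⊗≫ (((η_ X Y ▷ X) ≫ (α_ X Y X).hom ≫ (X ◁ ε_ X Y)) ▷ Z) ⊗≫
            (X ◁ ((η_ Z W ▷ Z) ≫ (α_ Z W Z).hom ≫ (Z ◁ ε_ Z W))) ⊗≫ 𝟙 _ := by
          monoidal
      _ = (λ_ (X ⊗ Z)).hom ≫ (ρ_ (X ⊗ Z)).inv := by
          rw [ExactPairing.evaluation_coevaluation, ExactPairing.evaluation_coevaluation]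
          monoidal

end TensorPairing

section DualIso

variable (B B' : C) [ExactPairing B B']

/-- Candidate inverse to `curry (β ≫ ε) : B' ⟶ Dl B`. -/
noncomputable def dualCompare : B' ⟶ Dl B := MonoidalClosed.curry ((β_ B B').hom ≫ ε_ B B')

noncomputable def dualCompareInv : Dl B ⟶ B' :=
  (ρ_ (Dl B)).inv ≫ (Dl B ◁ η_ B B') ≫ (α_ (Dl B) B B').inv ≫ (ev' B ▷ B') ≫ (λ_ B').hom

lemma dualCompare_whisker_ev : (dualCompare B B' ▷ B) ≫ ev' B = ε_ B B' := by
  erw [ev', BraidedCategory.braiding_naturality_left_assoc, ← MonoidalClosed.uncurry_eq]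
  rw [dualCompare, MonoidalClosed.uncurry_curry, SymmetricCategory.symmetry_assoc]

lemma dualCompare_comp_inv : dualCompare B B' ≫ dualCompareInv B B' = 𝟙 B' := by
  calc dualCompare B B' ≫ dualCompareInv B B'
      = 𝟙 _ ⊗≫ (dualCompare B B' ▷ 𝟙_ C ≫ Dl B ◁ η_ B B') ⊗≫ (ev' B ▷ B') ⊗≫ 𝟙 _ := by
        rw [dualCompareInv]; monoidal
    _ = 𝟙 _ ⊗≫ (B' ◁ η_ B B') ⊗≫ (((dualCompare B B' ▷ B) ≫ ev' B) ▷ B') ⊗≫ 𝟙 _ := by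
        rw [← whisker_exchange]; monoidal
    _ = 𝟙 _ ⊗≫ ((B' ◁ η_ B B') ≫ (α_ B' B B').inv ≫ (ε_ B B' ▷ B')) ⊗≫ 𝟙 _ := by
        rw [dualCompare_whisker_ev]; monoidal
    _ = 𝟙 B' := by
        rw [ExactPairing.coevaluation_evaluation]; monoidal

lemma dualCompareInv_whisker_ev : (dualCompareInv B B' ▷ B) ≫ ε_ B B' = ev' B := by
  calc (dualCompareInv B B' ▷ B) ≫ ε_ B B'
      = 𝟙 _ ⊗≫ ((Dl B ◁ η_ B B') ▷ B) ⊗≫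
          ((ev' B ▷ ((B' ⊗ B : C))) ≫ (𝟙_ C ◁ ε_ B B')) ⊗≫ 𝟙 _ := by
        rw [dualCompareInv]; monoidal
    _ = 𝟙 _ ⊗≫ ((Dl B ◁ η_ B B') ▷ B) ⊗≫
          ((((Dl B ⊗ B : C)) ◁ ε_ B B') ≫ (ev' B ▷ 𝟙_ C)) ⊗≫ 𝟙 _ := by
        rw [whisker_exchange]
    _ = 𝟙 _ ⊗≫ (Dl B ◁ ((η_ B B' ▷ B) ≫ (α_ B B' B).hom ≫ (B ◁ ε_ B B'))) ⊗≫ ev' B ⊗≫ 𝟙 _ := by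
        monoidal
    _ = ev' B := by
        rw [ExactPairing.evaluation_coevaluation]; monoidal

lemma inv_comp_dualCompare : dualCompareInv B B' ≫ dualCompare B B' = 𝟙 (Dl B) := by
  apply MonoidalClosed.uncurry_injective
  have h1 : MonoidalClosed.uncurry (𝟙 (Dl B)) = (ihom.ev B).app (𝟙_ C) :=
    MonoidalClosed.uncurry_id_eq_ev _ _
  erw [MonoidalClosed.uncurry_natural_left, h1, ihom_ev_eq]
  rw [dualCompare, MonoidalClosed.uncurry_curry]
  rw [whisker_cancel' (dualCompareInv B B') (ε_ B B')]
  rw [dualCompareInv_whisker_ev]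

lemma isIso_dualCompare : IsIso (dualCompare B B') :=
  ⟨dualCompareInv B B', dualCompare_comp_inv B B', inv_comp_dualCompare B B'⟩

end DualIso

theorem selfDual_isIso (X : C) (hwd : IsIso (wdMap X)) : IsIso (selfDualMap X) := by
  letI : ExactPairing X (Dl X) := exactPairingOfWd X
  letI : ExactPairing (Dl X) X := BraidedCategory.exactPairing_swap X (Dl X)
  letI : ExactPairing (X ⊗ Dl X) (X ⊗ Dl X) := exactPairingTensor X (Dl X) (Dl X) X
  have heval : ε_ (X ⊗ Dl X) (X ⊗ Dl X) = (α_ X (Dl X) (X ⊗ Dl X)).hom ≫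
      (X ◁ ((α_ (Dl X) X (Dl X)).inv ≫ (ev' X ▷ Dl X) ≫ (λ_ (Dl X)).hom)) ≫
      (β_ X (Dl X)).hom ≫ ev' X := rfl
  have hu : MonoidalClosed.uncurry (selfDualMap X) =
      (β_ (X ⊗ Dl X) (X ⊗ Dl X)).hom ≫ ε_ (X ⊗ Dl X) (X ⊗ Dl X) := by
    erw [heval, selfDualMap, pairMap, MonoidalClosed.uncurry_natural_left,
      MonoidalClosed.uncurry_curry]
    rw [BraidedCategory.braiding_naturality_right_assoc]
    rw [associator_naturality_left_assoc]
    rw [← whisker_exchange_assoc]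
    rw [reflex_whiskerRight_ev]
  have heq : selfDualMap X = dualCompare (X ⊗ Dl X) (X ⊗ Dl X) := by
    apply MonoidalClosed.uncurry_injective
    rw [hu, dualCompare, MonoidalClosed.uncurry_curry]
  rw [heq]
  exact isIso_dualCompare _ _

/-- In a closed symmetric monoidal category, if `X` is weakly dualizable
(the canonical map `X ⊗ D X ⟶ 𝓗om(X, X)` is an isomorphism) and reflexive (the canonical map
`X ⟶ D D X` is an isomorphism), then `X` is dualizable: `X` is reflexive and the canonical
map `X ⊗ D X ⟶ D (X ⊗ D X)` is an isomorphism (i.e. `X ⊗ D X` is self-dual). -/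
theorem stmt1 (X : C) (hwd : IsIso (wdMap X)) (hrefl : IsIso (reflexMap X)) :
    IsIso (reflexMap X) ∧ IsIso (selfDualMap X) := by
  exact ⟨hrefl, selfDual_isIso X hwd⟩
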